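/- arXiv:2004.03048 — 5 statements merged into one kernel-verified Lean document; each statement's English description precedes it below -/
import Mathlib

section
/- Let f > 0 and C_lb > 0. Consider a left pinhole camera at the origin and a back pinhole camera displaced backward along the optical axis, so that a 3D point with left-frame coordinates (x, y, z) has back-frame coordinates (x, y, z + C_lb); both cameras have focal length f and the same principal point (c_x, c_y). Let X₁ = (x₁, y₁, z) and X₂ = (x₂, y₂, z) be two distinct 3D points with the same depth z > 0. Let m_l be the Euclidean distance between their pixel projections in the left image and m_b the Euclidean distance between their pixel projections in the back image. Then m_b > 0, m_l/m_b - 1 > 0, and z = C_lb / (m_l/m_b - 1). -/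
/-- Proposition 2: depth from left/back pixel distances.
A pinhole camera with focal length `f` and principal point `(cx, cy)` projects
`(x, y, z)` (with `z > 0`) to `(f*x/z + cx, f*y/z + cy)`.  The back camera sees
the point at depth `z + Clb`. -/
theorem depth_from_back_view
    (f Clb cx cy : ℝ) (hf : f > 0) (hClb : Clb > 0)
    (x₁ y₁ x₂ y₂ z : ℝ) (hz : z > 0)
    (hne : (x₁, y₁, z) ≠ (x₂, y₂, z))
    (ml mb : ℝ)
    (hml : ml = Real.sqrt (((f * x₁ / z + cx) - (f * x₂ / z + cx))^2 +
                           ((f * y₁ / z + cy) - (f * y₂ / z + cy))^2))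
    (hmb : mb = Real.sqrt (((f * x₁ / (z + Clb) + cx) - (f * x₂ / (z + Clb) + cx))^2 +
                           ((f * y₁ / (z + Clb) + cy) - (f * y₂ / (z + Clb) + cy))^2)) :
    mb > 0 ∧ ml / mb - 1 > 0 ∧ z = Clb / (ml / mb - 1) := by
  have hzb : z + Clb > 0 := by linarith
  have hz' : z ≠ 0 := ne_of_gt hz
  have hzb' : z + Clb ≠ 0 := ne_of_gt hzb
  -- the squared 3D pixel-plane distance
  set s : ℝ := (x₁ - x₂)^2 + (y₁ - y₂)^2 with hs
  have hspos : s > 0 := by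
    rcases eq_or_ne x₁ x₂ with hx | hx
    · rcases eq_or_ne y₁ y₂ with hy | hy
      · exact absurd (by rw [hx, hy]) hne
      · have hy2 := sub_ne_zero.mpr hy
        have : (y₁ - y₂)^2 > 0 := by positivity
        nlinarith [sq_nonneg (x₁ - x₂)]
    · have hx2 := sub_ne_zero.mpr hx
      have : (x₁ - x₂)^2 > 0 := by positivity
      nlinarith [sq_nonneg (y₁ - y₂)]
  set d : ℝ := Real.sqrt s with hd
  have hdpos : d > 0 := Real.sqrt_pos.mpr hspos
  have key : ∀ w : ℝ, w > 0 →
      Real.sqrt (((f * x₁ / w + cx) - (f * x₂ / w + cx))^2 +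
                 ((f * y₁ / w + cy) - (f * y₂ / w + cy))^2) = (f / w) * d := by
    intro w hw
    have hw' : w ≠ 0 := ne_of_gt hw
    have h1 : ((f * x₁ / w + cx) - (f * x₂ / w + cx))^2 +
              ((f * y₁ / w + cy) - (f * y₂ / w + cy))^2 = (f / w)^2 * s := by
      field_simp
      ring
    rw [h1, Real.sqrt_mul (sq_nonneg _), Real.sqrt_sq (by positivity : (0:ℝ) ≤ f / w)]
  have hml' : ml = (f / z) * d := by rw [hml, key z hz]
  have hmb' : mb = (f / (z + Clb)) * d := by rw [hmb, key (z + Clb) hzb]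
  have hmbpos : mb > 0 := by rw [hmb']; positivity
  have hratio : ml / mb = (z + Clb) / z := by
    rw [hml', hmb']
    field_simp
  have h2 : ml / mb - 1 = Clb / z := by rw [hratio]; field_simp; ring
  refine ⟨hmbpos, ?_, ?_⟩
  · rw [h2]; positivity
  · rw [h2]; field_simp
end

section
/- Let f > 0 and C_lb > 0. Consider a left pinhole camera at the origin and a back pinhole camera displaced backward along the optical axis, so that a 3D point with left-frame coordinates (x, y, z) has back-frame coordinates (x, y, z + C_lb); both cameras have focal length f and the same principal point. Let X₁ = (x₁, y₁, z) and X₂ = (x₂, y₂, z) be two distinct 3D points with the same depth z > 0, and let m_l and m_b denote the Euclidean distances between their pixel projections in the left and back images, respectively. Then m_b > 0 and m_l/m_b = (z + C_lb)/z. -/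
/-- Key ratio identity in the proof of Proposition 2: for two distinct points at the same
depth `z > 0`, the ratio of left-image to back-image pixel distances equals `(z + Clb)/z`. -/
theorem pixel_distance_ratio
    (f Clb cx cy : ℝ) (hf : f > 0) (hClb : Clb > 0)
    (x₁ y₁ x₂ y₂ z : ℝ) (hz : z > 0)
    (hne : (x₁, y₁, z) ≠ (x₂, y₂, z))
    (ml mb : ℝ)
    (hml : ml = Real.sqrt (((f * x₁ / z + cx) - (f * x₂ / z + cx))^2 +
                           ((f * y₁ / z + cy) - (f * y₂ / z + cy))^2))
    (hmb : mb = Real.sqrt (((f * x₁ / (z + Clb) + cx) - (f * x₂ / (z + Clb) + cx))^2 +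
                           ((f * y₁ / (z + Clb) + cy) - (f * y₂ / (z + Clb) + cy))^2)) :
    mb > 0 ∧ ml / mb = (z + Clb) / z := by
  have hzClb : z + Clb > 0 := by linarith
  set d : ℝ := (x₁ - x₂)^2 + (y₁ - y₂)^2 with hd
  have hdpos : d > 0 := by
    rcases eq_or_ne x₁ x₂ with hx | hx
    · rcases eq_or_ne y₁ y₂ with hy | hy
      · exact absurd (by simp [hx, hy]) hne
      · have hy' : y₁ - y₂ ≠ 0 := sub_ne_zero.mpr hy
        have : (y₁ - y₂)^2 > 0 := by positivity
        nlinarith [sq_nonneg (x₁ - x₂)]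
    · have hx' : x₁ - x₂ ≠ 0 := sub_ne_zero.mpr hx
      have : (x₁ - x₂)^2 > 0 := by positivity
      nlinarith [sq_nonneg (y₁ - y₂)]
  have hml' : ml = (f / z) * Real.sqrt d := by
    rw [hml]
    have h1 : ((f * x₁ / z + cx) - (f * x₂ / z + cx))^2 +
        ((f * y₁ / z + cy) - (f * y₂ / z + cy))^2 = (f / z)^2 * d := by
      field_simp
      ring
    rw [h1, Real.sqrt_mul (by positivity), Real.sqrt_sq (by positivity)]
  have hmb' : mb = (f / (z + Clb)) * Real.sqrt d := by
    rw [hmb]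
    have h1 : ((f * x₁ / (z + Clb) + cx) - (f * x₂ / (z + Clb) + cx))^2 +
        ((f * y₁ / (z + Clb) + cy) - (f * y₂ / (z + Clb) + cy))^2 = (f / (z + Clb))^2 * d := by
      field_simp
      ring
    rw [h1, Real.sqrt_mul (by positivity), Real.sqrt_sq (by positivity)]
  have hsd : Real.sqrt d > 0 := Real.sqrt_pos.mpr hdpos
  constructor
  · rw [hmb']; positivity
  · rw [hml', hmb']
    rw [div_eq_div_iff (by positivity) (by positivity)]
    field_simp
end

section
/- Let f > 0, C_lr > 0, C_lb > 0, and z > 0. Suppose m_l and m_b are positive reals satisfying m_l/m_b = (z + C_lb)/z (the left/back pixel-distance ratio for a pair of same-depth points at depth z). Suppose the estimated disparities d₁ and d₂ at the two corresponding left-image pixels each equal the true disparity minus an unknown offset q, i.e., d₁ = d₂ = f·C_lr/z - q. Then q = f·(C_lr/C_lb)·(m_l/m_b - 1) - (d₁ + d₂)/2. -/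
/-- Disparity-offset formula (Eq. 11): if the left/back pixel-distance ratio satisfies
`ml/mb = (z + Clb)/z` and the estimated disparities equal the true disparity `f*Clr/z`
minus an unknown offset `q`, then `q` is recovered by the stated formula. -/
theorem disparity_offset_formula
    (f Clr Clb z : ℝ) (hf : f > 0) (hClr : Clr > 0) (hClb : Clb > 0) (hz : z > 0)
    (ml mb : ℝ) (hml : ml > 0) (hmb : mb > 0)
    (hratio : ml / mb = (z + Clb) / z)
    (d₁ d₂ q : ℝ)
    (hd₁ : d₁ = f * Clr / z - q) (hd₂ : d₂ = f * Clr / z - q) :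
    q = f * (Clr / Clb) * (ml / mb - 1) - (d₁ + d₂) / 2 := by
  rw [hratio, hd₁, hd₂]
  field_simp
  ring
end

section
/- Let f > 0, C_lr > 0, C_lb > 0, and z > 0, and suppose m_l and m_b are positive reals satisfying m_l/m_b = (z + C_lb)/z. Then the true disparity f·C_lr/z of a point at depth z equals f·(C_lr/C_lb)·(m_l/m_b - 1). -/
/-- Corollary of Proposition 2 and the depth-to-disparity formula: the true disparity
`f*Clr/z` can be computed from the left/back pixel-distance ratio. -/
theorem true_disparity_from_ratio
    (f Clr Clb z : ℝ) (hf : f > 0) (hClr : Clr > 0) (hClb : Clb > 0) (hz : z > 0)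
    (ml mb : ℝ) (hml : ml > 0) (hmb : mb > 0)
    (hratio : ml / mb = (z + Clb) / z) :
    f * Clr / z = f * (Clr / Clb) * (ml / mb - 1) := by
  rw [hratio]
  field_simp
  ring
end

section
/- Let a pinhole camera have focal length f > 0 and principal point (c_x, c_y). Let (x, y, z) be a 3D point with z > 0, let θ ∈ (-π/2, π/2) satisfy tan θ = y/z, and let γ be such that θ - γ ∈ (-π/2, π/2). Let (x', y', z') = (x, y·cos γ - z·sin γ, y·sin γ + z·cos γ) and let u = f·x/z + c_x and u' = f·x'/z' + c_x be the pixel column coordinates before and after the rotation. Then |u' - u| ≤ |u - c_x| · (θ² + (θ - γ)²) / (2·cos(θ - γ)). -/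
/-- Quantitative version of the approximation `u' ≈ u` (Eq. 3) in Proposition 1: a small
rotation by `γ` about the camera's x-axis leaves the pixel column coordinate approximately
unchanged, with quadratic-order error in the ray angles. -/
theorem column_invariance_approx
    (f cx cy : ℝ) (hf : f > 0)
    (x y z θ γ : ℝ) (hz : z > 0)
    (hθ : θ ∈ Set.Ioo (-(Real.pi / 2)) (Real.pi / 2))
    (htan : Real.tan θ = y / z)
    (hθγ : θ - γ ∈ Set.Ioo (-(Real.pi / 2)) (Real.pi / 2))
    (x' y' z' : ℝ)
    (hx' : x' = x)
    (hy' : y' = y * Real.cos γ - z * Real.sin γ)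
    (hz' : z' = y * Real.sin γ + z * Real.cos γ)
    (u u' : ℝ)
    (hu : u = f * x / z + cx)
    (hu' : u' = f * x' / z' + cx) :
    |u' - u| ≤ |u - cx| * (θ ^ 2 + (θ - γ) ^ 2) / (2 * Real.cos (θ - γ)) := by
  have hcθ : Real.cos θ > 0 := Real.cos_pos_of_mem_Ioo hθ
  have hcθγ : Real.cos (θ - γ) > 0 := Real.cos_pos_of_mem_Ioo hθγ
  have hy : y = z * Real.sin θ / Real.cos θ := by
    have := htan
    rw [Real.tan_eq_sin_div_cos] at this
    field_simp at this ⊢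
    linarith [this]
  have hz'val : z' = z * Real.cos (θ - γ) / Real.cos θ := by
    rw [hz', hy, Real.cos_sub]
    field_simp
    ring
  have hz'pos : z' > 0 := by
    rw [hz'val]; positivity
  have key : u' - u = (u - cx) * (Real.cos θ - Real.cos (θ - γ)) / Real.cos (θ - γ) := by
    rw [hu', hu, hx', hz'val]
    field_simp
    ring
  have hbound : |Real.cos θ - Real.cos (θ - γ)| ≤ (θ ^ 2 + (θ - γ) ^ 2) / 2 := by
    have h1 : 1 - θ ^ 2 / 2 ≤ Real.cos θ := Real.one_sub_sq_div_two_le_cos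
    have h2 : 1 - (θ - γ) ^ 2 / 2 ≤ Real.cos (θ - γ) := Real.one_sub_sq_div_two_le_cos
    have h3 : Real.cos θ ≤ 1 := Real.cos_le_one θ
    have h4 : Real.cos (θ - γ) ≤ 1 := Real.cos_le_one (θ - γ)
    rw [abs_le]; constructor <;> nlinarith
  calc |u' - u| = |u - cx| * |Real.cos θ - Real.cos (θ - γ)| / Real.cos (θ - γ) := by
        rw [key, abs_div, abs_mul, abs_of_pos hcθγ]
    _ ≤ |u - cx| * ((θ ^ 2 + (θ - γ) ^ 2) / 2) / Real.cos (θ - γ) := by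
        gcongr
    _ = |u - cx| * (θ ^ 2 + (θ - γ) ^ 2) / (2 * Real.cos (θ - γ)) := by
        field_simp
end
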